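/- For all complex numbers z with Re z > 0 and Im z > 0, one has Im(z/tanh z) > 0. -/

import Mathlib

private lemma sinh_decomp (z : ℂ) :
    Complex.sinh z = (Real.sinh z.re * Real.cos z.im : ℝ) +
      (Real.cosh z.re * Real.sin z.im : ℝ) * Complex.I := by
  conv_lhs => rw [← Complex.re_add_im z]
  rw [Complex.sinh_add, Complex.sinh_mul_I, Complex.cosh_mul_I]
  push_cast
  ring

private lemma cosh_decomp (z : ℂ) :
    Complex.cosh z = (Real.cosh z.re * Real.cos z.im : ℝ) +
      (Real.sinh z.re * Real.sin z.im : ℝ) * Complex.I := by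
  conv_lhs => rw [← Complex.re_add_im z]
  rw [Complex.cosh_add, Complex.sinh_mul_I, Complex.cosh_mul_I]
  push_cast
  ring

private lemma key_real (x y sx cx sy cy : ℝ) (hx : 0 < x) (hy : 0 < y)
    (hsx : 0 < sx) (hcx : 0 < cx) (h1 : 2 * x < 2 * sx * cx) (h2 : 2 * sy * cy < 2 * y)
    (hpy : sy ^ 2 + cy ^ 2 = 1) :
    0 < y * (sx * cx / (cy ^ 2 + sx ^ 2)) /
        (sx * cx / (cy ^ 2 + sx ^ 2) * (sx * cx / (cy ^ 2 + sx ^ 2)) +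
          sy * cy / (cy ^ 2 + sx ^ 2) * (sy * cy / (cy ^ 2 + sx ^ 2))) -
      x * (sy * cy / (cy ^ 2 + sx ^ 2)) /
        (sx * cx / (cy ^ 2 + sx ^ 2) * (sx * cx / (cy ^ 2 + sx ^ 2)) +
          sy * cy / (cy ^ 2 + sx ^ 2) * (sy * cy / (cy ^ 2 + sx ^ 2))) := by
  have hD : 0 < cy ^ 2 + sx ^ 2 := by positivity
  set A := sx * cx / (cy ^ 2 + sx ^ 2) with hA
  set B := sy * cy / (cy ^ 2 + sx ^ 2) with hB
  have hApos : 0 < A := by positivity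
  have hM : 0 < A * A + B * B := by nlinarith [sq_nonneg B, mul_self_nonneg B]
  rw [div_sub_div_same]
  apply div_pos _ hM
  have hkey : 0 < y * (sx * cx) - x * (sy * cy) := by
    nlinarith [mul_lt_mul_of_pos_left h2 hx, mul_lt_mul_of_pos_left h1 hy]
  have heq : y * A - x * B = (y * (sx * cx) - x * (sy * cy)) / (cy ^ 2 + sx ^ 2) := by
    rw [hA, hB]; ring
  rw [heq]
  exact div_pos hkey hD

theorem im_div_tanh_pos (z : ℂ) (hre : 0 < z.re) (him : 0 < z.im) :
    0 < (z / Complex.tanh z).im := by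
  have hpyth : Real.cosh z.re ^ 2 - Real.sinh z.re ^ 2 = 1 := Real.cosh_sq_sub_sinh_sq z.re
  have hpyth2 : Real.sin z.im ^ 2 + Real.cos z.im ^ 2 = 1 := Real.sin_sq_add_cos_sq z.im
  have hsxpos : 0 < Real.sinh z.re := Real.sinh_pos_iff.mpr hre
  have hcxpos : 0 < Real.cosh z.re := Real.cosh_pos _
  have hsre : (Complex.sinh z).re = Real.sinh z.re * Real.cos z.im := by
    rw [sinh_decomp]; simp [Complex.sinh_ofReal_re, Complex.cosh_ofReal_re, Complex.sin_ofReal_re, Complex.cos_ofReal_re]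
  have hsim : (Complex.sinh z).im = Real.cosh z.re * Real.sin z.im := by
    rw [sinh_decomp]; simp [Complex.sinh_ofReal_re, Complex.cosh_ofReal_re, Complex.sin_ofReal_re, Complex.cos_ofReal_re]
  have hcre : (Complex.cosh z).re = Real.cosh z.re * Real.cos z.im := by
    rw [cosh_decomp]; simp [Complex.sinh_ofReal_re, Complex.cosh_ofReal_re, Complex.sin_ofReal_re, Complex.cos_ofReal_re]
  have hcim : (Complex.cosh z).im = Real.sinh z.re * Real.sin z.im := by
    rw [cosh_decomp]; simp [Complex.sinh_ofReal_re, Complex.cosh_ofReal_re, Complex.sin_ofReal_re, Complex.cos_ofReal_re]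
  have hnc : Complex.normSq (Complex.cosh z) = Real.cos z.im ^ 2 + Real.sinh z.re ^ 2 := by
    rw [Complex.normSq_apply, hcre, hcim]; nlinarith
  have hD : (0:ℝ) < Real.cos z.im ^ 2 + Real.sinh z.re ^ 2 := by positivity
  have htre : (Complex.tanh z).re
      = Real.sinh z.re * Real.cosh z.re / (Real.cos z.im ^ 2 + Real.sinh z.re ^ 2) := by
    rw [Complex.tanh_eq_sinh_div_cosh, Complex.div_re, hsre, hsim, hcre, hcim, hnc]
    field_simp
    linear_combination hpyth2
  have htim : (Complex.tanh z).im
      = Real.sin z.im * Real.cos z.im / (Real.cos z.im ^ 2 + Real.sinh z.re ^ 2) := by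
    rw [Complex.tanh_eq_sinh_div_cosh, Complex.div_im, hsre, hsim, hcre, hcim, hnc]
    field_simp
    linear_combination (Real.sin z.im * Real.cos z.im) * hpyth
  rw [Complex.div_im, Complex.normSq_apply, htre, htim]
  have h1 : 2 * z.re < 2 * Real.sinh z.re * Real.cosh z.re := by
    have := Real.self_lt_sinh_iff.mpr (by linarith : (0:ℝ) < 2 * z.re)
    rw [Real.sinh_two_mul] at this; linarith
  have h2 : 2 * Real.sin z.im * Real.cos z.im < 2 * z.im := by
    have := Real.sin_lt (by linarith : (0:ℝ) < 2 * z.im)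
    rw [Real.sin_two_mul] at this; linarith
  exact key_real z.re z.im _ _ _ _ hre him hsxpos hcxpos h1 h2 hpyth2
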